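/- For all natural numbers n ≥ 1, the sum over k from 1 to n of C(n,k)²·k²·H_k·H_{n-k} equals n³/(4n-2)·C(2n,n)·[(H^{(2)}_n - H^{(2)}_{2n-1}) + (2H_n - H_{2n-1})·(2H_n - H_{2n-1} - (2n²-1)/(2n³-n²)) - (n-1)(2n²-2n+1)/(n³(2n-1)²)]. -/

import Mathlib

open Finset BigOperators

def H (n : ℕ) : ℚ := ∑ i ∈ Finset.range n, 1 / (i + 1 : ℚ)

def H2 (n : ℕ) : ℚ := ∑ i ∈ Finset.range n, 1 / ((i + 1 : ℚ))^2

namespace Stmt16Aux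

open Polynomial

noncomputable def fall (k : ℕ) : Polynomial ℚ := ∏ i ∈ Finset.range k, (X - C (i : ℚ))

lemma H_succ (n : ℕ) : H (n + 1) = H n + 1 / (n + 1 : ℚ) := Finset.sum_range_succ _ n
lemma H2_succ (n : ℕ) : H2 (n + 1) = H2 n + 1 / ((n + 1 : ℚ))^2 := Finset.sum_range_succ _ n

lemma sum_inv_eq (a k : ℕ) (h : k ≤ a) :
    ∑ j ∈ Finset.range k, 1 / ((a : ℚ) - j) = H a - H (a - k) := by
  induction k with
  | zero => simp
  | succ k ih =>
    rw [Finset.sum_range_succ, ih (le_of_lt (Nat.lt_of_succ_le h))]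
    have h1 : a - k = (a - (k+1)) + 1 := by omega
    rw [h1, H_succ]
    have h2 : ((a - (k+1) : ℕ) : ℚ) + 1 = (a : ℚ) - k := by
      have : ((a - (k+1) : ℕ) : ℚ) = (a : ℚ) - (k+1) := by
        push_cast [Nat.cast_sub h]; ring
      rw [this]; ring
    rw [h2]; ring

lemma sum_inv_sq_eq (a k : ℕ) (h : k ≤ a) :
    ∑ j ∈ Finset.range k, (1 / ((a : ℚ) - j))^2 = H2 a - H2 (a - k) := by
  induction k with
  | zero => simp
  | succ k ih =>
    rw [Finset.sum_range_succ, ih (le_of_lt (Nat.lt_of_succ_le h))]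
    have h1 : a - k = (a - (k+1)) + 1 := by omega
    rw [h1, H2_succ]
    have h2 : ((a - (k+1) : ℕ) : ℚ) + 1 = (a : ℚ) - k := by
      have : ((a - (k+1) : ℕ) : ℚ) = (a : ℚ) - (k+1) := by
        push_cast [Nat.cast_sub h]; ring
      rw [this]; ring
    rw [h2, div_pow, one_pow]; ring

lemma derivative_finset_prod (s : Finset ℕ) (f : ℕ → Polynomial ℚ) :
    derivative (∏ i ∈ s, f i) = ∑ i ∈ s, (∏ j ∈ s.erase i, f j) * derivative (f i) := by
  classical
  induction s using Finset.induction_on with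
  | empty => simp
  | @insert x s hx ih =>
    rw [Finset.prod_insert hx, derivative_mul, Finset.sum_insert hx, ih]
    rw [Finset.erase_insert hx]
    rw [Finset.mul_sum]
    congr 1
    · ring
    · apply Finset.sum_congr rfl
      intro y hy
      rw [Finset.erase_insert_of_ne (by intro hyx; exact hx (hyx ▸ hy))]
      rw [Finset.prod_insert (fun hc => hx (Finset.mem_of_mem_erase hc))]
      ring

lemma fall_eval (a k : ℕ) : (fall k).eval (a : ℚ) = (a.descFactorial k : ℚ) := by
  induction k with
  | zero => simp [fall]
  | succ k ih =>
    rw [fall, Finset.prod_range_succ, ← fall, eval_mul, ih, Nat.descFactorial_succ,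
      eval_sub, eval_X, eval_C]
    by_cases h : k < a
    · rw [Nat.cast_mul, Nat.cast_sub (le_of_lt h)]
      ring
    · have h1 : a - k = 0 := by omega
      rcases eq_or_lt_of_le (Nat.le_of_not_lt h) with he | hlt
      · simp [← he, h1]
      · simp [h1, Nat.descFactorial_eq_zero_iff_lt.mpr hlt]


lemma erase_prod_eval (a k : ℕ) (h : k ≤ a) {i : ℕ} (hi : i ∈ Finset.range k) :
    (∏ j ∈ (Finset.range k).erase i, (X - C (j : ℚ))).eval (a : ℚ)
      = (a.descFactorial k : ℚ) * (1 / ((a : ℚ) - i)) := by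
  have hne : (a : ℚ) - i ≠ 0 := by
    have : (i : ℚ) < a := by exact_mod_cast lt_of_lt_of_le (Finset.mem_range.mp hi) h
    intro hc; linarith
  have key : ((a : ℚ) - i) * (∏ j ∈ (Finset.range k).erase i, (X - C (j : ℚ))).eval (a : ℚ)
      = (a.descFactorial k : ℚ) := by
    rw [← fall_eval a k, fall, eval_prod, ← Finset.mul_prod_erase _ _ hi]
    simp [eval_prod]
  apply mul_left_cancel₀ hne
  rw [key]
  field_simp

lemma deriv_fall_eq (k : ℕ) :
    derivative (fall k) = ∑ i ∈ Finset.range k, ∏ j ∈ (Finset.range k).erase i, (X - C (j : ℚ)) := by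
  rw [fall, derivative_finset_prod]
  apply Finset.sum_congr rfl
  intro i _
  simp

lemma fall_deriv_eval (a k : ℕ) (h : k ≤ a) :
    (derivative (fall k)).eval (a : ℚ) = (a.descFactorial k : ℚ) * (H a - H (a - k)) := by
  rw [deriv_fall_eq, eval_finset_sum]
  rw [Finset.sum_congr rfl (fun i hi => erase_prod_eval a k h hi), ← Finset.mul_sum,
    sum_inv_eq a k h]

lemma fall_deriv2_eval (a k : ℕ) (h : k ≤ a) :
    (derivative (derivative (fall k))).eval (a : ℚ)
      = (a.descFactorial k : ℚ) * ((H a - H (a - k))^2 - (H2 a - H2 (a - k))) := by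
  rw [deriv_fall_eq, derivative_sum]
  rw [eval_finset_sum]
  have step : ∀ i ∈ Finset.range k,
      (derivative (∏ j ∈ (Finset.range k).erase i, (X - C (j : ℚ)))).eval (a : ℚ)
        = (a.descFactorial k : ℚ) * (1 / ((a : ℚ) - i)) * ((H a - H (a - k)) - 1 / ((a : ℚ) - i)) := by
    intro i hi
    rw [derivative_finset_prod, eval_finset_sum]
    have hterm : ∀ l ∈ (Finset.range k).erase i,
        ((∏ j ∈ ((Finset.range k).erase i).erase l, (X - C (j : ℚ))) * derivative (X - C (l : ℚ))).eval (a : ℚ)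
          = ((a.descFactorial k : ℚ) * (1 / ((a : ℚ) - i))) * (1 / ((a : ℚ) - l)) := by
      intro l hl
      have hine : (a : ℚ) - i ≠ 0 := by
        have : (i : ℚ) < a := by exact_mod_cast lt_of_lt_of_le (Finset.mem_range.mp hi) h
        intro hc; linarith
      have hlr : l ∈ Finset.range k := Finset.mem_of_mem_erase hl
      have hlne : (a : ℚ) - l ≠ 0 := by
        have : (l : ℚ) < a := by exact_mod_cast lt_of_lt_of_le (Finset.mem_range.mp hlr) h
        intro hc; linarith
      have key : ((a : ℚ) - l) * (∏ j ∈ ((Finset.range k).erase i).erase l, (X - C (j : ℚ))).eval (a : ℚ)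
          = (∏ j ∈ (Finset.range k).erase i, (X - C (j : ℚ))).eval (a : ℚ) := by
        rw [eval_prod, eval_prod, ← Finset.mul_prod_erase _ _ hl]
        simp
      rw [erase_prod_eval a k h hi] at key
      simp only [derivative_sub, derivative_X, derivative_C, sub_zero, eval_mul, eval_one, mul_one]
      apply mul_left_cancel₀ hlne
      rw [key]
      field_simp
    rw [Finset.sum_congr rfl hterm, ← Finset.mul_sum]
    have : ∑ l ∈ (Finset.range k).erase i, 1 / ((a : ℚ) - l)
        = (H a - H (a - k)) - 1 / ((a : ℚ) - i) := by
      have := Finset.sum_erase_add (Finset.range k) (fun l => 1 / ((a : ℚ) - l)) hi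
      rw [sum_inv_eq a k h] at this
      linarith [this]
    rw [this]
  rw [Finset.sum_congr rfl step]
  have expand : ∀ i ∈ Finset.range k,
      (a.descFactorial k : ℚ) * (1 / ((a : ℚ) - i)) * ((H a - H (a - k)) - 1 / ((a : ℚ) - i))
        = (a.descFactorial k : ℚ) * ((H a - H (a - k)) * (1 / ((a : ℚ) - i)) - (1 / ((a : ℚ) - i))^2) := by
    intro i _; ring
  rw [Finset.sum_congr rfl expand, ← Finset.mul_sum, Finset.sum_sub_distrib, ← Finset.mul_sum,
    sum_inv_eq a k h, sum_inv_sq_eq a k h]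
  ring

lemma vdm (m : ℕ) :
    ∑ j ∈ Finset.range (m + 1),
        Polynomial.C (Polynomial.C ((m.choose j : ℚ))) * Polynomial.C (fall j)
          * (fall (m - j)).map (Polynomial.C : ℚ →+* Polynomial ℚ)
      = ∏ i ∈ Finset.range m, (Polynomial.C X + X - Polynomial.C (Polynomial.C (i : ℚ))) := by
  induction m with
  | zero => simp [fall]
  | succ m ih =>
    set Cc : ℚ →+* Polynomial ℚ := (Polynomial.C : ℚ →+* Polynomial ℚ)
    set A2 : ℕ → Polynomial (Polynomial ℚ) := fun j =>
      Polynomial.C (Polynomial.C ((m.choose j : ℚ))) * Polynomial.C (fall j)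
        * (fall (m + 1 - j)).map Cc with hA2
    set B : ℕ → Polynomial (Polynomial ℚ) := fun j =>
      Polynomial.C (Polynomial.C ((m.choose j : ℚ))) * Polynomial.C (fall (j+1))
        * (fall (m - j)).map Cc with hB
    have step1 : ∑ j ∈ Finset.range (m + 2),
        Polynomial.C (Polynomial.C (((m+1).choose j : ℚ))) * Polynomial.C (fall j)
          * (fall (m + 1 - j)).map Cc
        = ∑ j ∈ Finset.range (m+1), (B j + A2 (j+1)) + A2 0 := by
      rw [Finset.sum_range_succ']
      refine congrArg₂ (· + ·) ?_ ?_
      · apply Finset.sum_congr rfl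
        intro j _
        have hc : (((m+1).choose (j+1) : ℚ)) = (m.choose j : ℚ) + (m.choose (j+1) : ℚ) := by
          rw [Nat.choose_succ_succ]; push_cast; ring
        rw [hc, map_add, map_add]
        have hidx : m + 1 - (j + 1) = m - j := by omega
        rw [hidx]
        simp only [hA2, hB]
        have hidx2 : m + 1 - (j + 1) = m - j := by omega
        rw [hidx2]
        ring
      · simp only [hA2]
        norm_num
    have step2 : ∑ j ∈ Finset.range (m+1), A2 (j+1) + A2 0
        = ∑ j ∈ Finset.range (m+1), A2 j := by
      rw [← Finset.sum_range_succ']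
      rw [Finset.sum_range_succ]
      have : A2 (m+1) = 0 := by
        simp only [hA2, Nat.choose_succ_self]
        norm_num
      rw [this, add_zero]
    have step3 : ∀ j ∈ Finset.range (m+1), B j + A2 j
        = (Polynomial.C (Polynomial.C ((m.choose j : ℚ))) * Polynomial.C (fall j)
            * (fall (m - j)).map Cc) * (Polynomial.C X + X - Polynomial.C (Polynomial.C ((m:ℚ)))) := by
      intro j hj
      have hjm : j ≤ m := Nat.lt_succ_iff.mp (Finset.mem_range.mp hj)
      have hfx : fall (j+1) = fall j * (X - C (j:ℚ)) := Finset.prod_range_succ _ j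
      have hfy : fall (m - j + 1) = fall (m-j) * (X - C (((m-j:ℕ)):ℚ)) := Finset.prod_range_succ _ _
      have hidx : m + 1 - j = m - j + 1 := by omega
      have hm : Polynomial.C (Polynomial.C ((m:ℚ)))
          = Polynomial.C (Polynomial.C ((j:ℚ))) + Polynomial.C (Polynomial.C (((m-j:ℕ)):ℚ)) := by
        rw [← map_add, ← map_add]
        congr 2
        have : ((m - j : ℕ) : ℚ) = (m:ℚ) - j := by
          push_cast [Nat.cast_sub hjm]; ring
        rw [this]; ring
      simp only [hB, hA2, hidx, hfx, hfy]
      rw [map_mul (Polynomial.C), Polynomial.map_mul, hm]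
      rw [map_sub (Polynomial.C), Polynomial.map_sub]
      simp only [Polynomial.map_X, Polynomial.map_C]
      ring
    calc ∑ j ∈ Finset.range (m + 1 + 1),
        Polynomial.C (Polynomial.C (((m+1).choose j : ℚ))) * Polynomial.C (fall j)
          * (fall (m + 1 - j)).map Cc
        = ∑ j ∈ Finset.range (m+1), (B j + A2 (j+1)) + A2 0 := step1
      _ = (∑ j ∈ Finset.range (m+1), B j + ∑ j ∈ Finset.range (m+1), A2 (j+1)) + A2 0 := by
          rw [Finset.sum_add_distrib]
      _ = ∑ j ∈ Finset.range (m+1), B j + (∑ j ∈ Finset.range (m+1), A2 (j+1) + A2 0) := by ring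
      _ = ∑ j ∈ Finset.range (m+1), B j + ∑ j ∈ Finset.range (m+1), A2 j := by rw [step2]
      _ = ∑ j ∈ Finset.range (m+1), (B j + A2 j) := by rw [Finset.sum_add_distrib]
      _ = ∑ j ∈ Finset.range (m+1), (Polynomial.C (Polynomial.C ((m.choose j : ℚ)))
            * Polynomial.C (fall j) * (fall (m - j)).map Cc)
            * (Polynomial.C X + X - Polynomial.C (Polynomial.C ((m:ℚ)))) :=
          Finset.sum_congr rfl step3
      _ = (∑ j ∈ Finset.range (m+1), Polynomial.C (Polynomial.C ((m.choose j : ℚ)))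
            * Polynomial.C (fall j) * (fall (m - j)).map Cc)
            * (Polynomial.C X + X - Polynomial.C (Polynomial.C ((m:ℚ)))) := by
          rw [Finset.sum_mul]
      _ = ∏ i ∈ Finset.range (m+1), (Polynomial.C X + X - Polynomial.C (Polynomial.C (i : ℚ))) := by
          rw [ih, Finset.prod_range_succ]

noncomputable abbrev Cc : ℚ →+* Polynomial ℚ := (Polynomial.C : ℚ →+* Polynomial ℚ)

/-- RHS of vdm as composition. -/
lemma rhs_comp (m : ℕ) :
    ∏ i ∈ Finset.range m, (Polynomial.C X + X - Polynomial.C (Polynomial.C (i : ℚ)))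
      = ((fall m).map Cc).comp (X + Polynomial.C X) := by
  rw [fall, Polynomial.map_prod, Polynomial.prod_comp]
  apply Finset.prod_congr rfl
  intro i _
  rw [Polynomial.map_sub, Polynomial.map_X, Polynomial.map_C, sub_comp, X_comp, C_comp]
  ring

/-- vdm after one derivative in y. -/
lemma dvdm (m : ℕ) :
    ∑ j ∈ Finset.range (m + 1),
        Polynomial.C (Polynomial.C ((m.choose j : ℚ))) * Polynomial.C (fall j)
          * ((derivative (fall (m - j))).map Cc)
      = ((derivative (fall m)).map Cc).comp (X + Polynomial.C X) := by
  have h := congrArg derivative (vdm m)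
  rw [rhs_comp, derivative_sum, derivative_comp] at h
  simp only [derivative_add, derivative_X, derivative_C, add_zero, one_mul] at h
  rw [derivative_map] at h
  rw [← h]
  apply Finset.sum_congr rfl
  intro j _
  rw [← map_mul Polynomial.C, derivative_C_mul, map_mul Polynomial.C, derivative_map]

/-- Evaluate y at b: from vdm. -/
lemma vdm_evy (m b : ℕ) :
    ∑ j ∈ Finset.range (m + 1),
        Polynomial.C ((m.choose j : ℚ)) * fall j * Polynomial.C ((fall (m - j)).eval (b : ℚ))
      = (fall m).comp (X + Polynomial.C (b : ℚ)) := by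
  have h := congrArg (Polynomial.eval ((b : Polynomial ℚ))) (vdm m)
  rw [rhs_comp] at h
  rw [eval_finset_sum] at h
  have hb : ((b : Polynomial ℚ)) = Polynomial.C ((b:ℚ)) := by
    rw [Polynomial.C_eq_natCast]
  calc ∑ j ∈ Finset.range (m + 1),
        Polynomial.C ((m.choose j : ℚ)) * fall j * Polynomial.C ((fall (m - j)).eval (b : ℚ))
      = ∑ j ∈ Finset.range (m + 1), (Polynomial.C (Polynomial.C ((m.choose j : ℚ)))
          * Polynomial.C (fall j) * (fall (m - j)).map Cc).eval ((b : Polynomial ℚ)) := by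
        apply Finset.sum_congr rfl
        intro j _
        rw [eval_mul, eval_mul, eval_C, eval_C, eval_map, hb, eval₂_at_apply]
    _ = (((fall m).map Cc).comp (X + Polynomial.C X)).eval ((b : Polynomial ℚ)) := h
    _ = (fall m).comp (X + Polynomial.C (b : ℚ)) := by
        rw [eval_comp, eval_add, eval_X, eval_C, eval_map, Polynomial.comp, hb, add_comm]

/-- dvdm with y evaluated at b. -/
lemma dvdm_evy (m b : ℕ) :
    ∑ j ∈ Finset.range (m + 1),
        Polynomial.C ((m.choose j : ℚ)) * fall j
          * Polynomial.C ((derivative (fall (m - j))).eval (b : ℚ))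
      = (derivative (fall m)).comp (X + Polynomial.C (b : ℚ)) := by
  have h := congrArg (Polynomial.eval ((b : Polynomial ℚ))) (dvdm m)
  rw [eval_finset_sum] at h
  have hb : ((b : Polynomial ℚ)) = Polynomial.C ((b:ℚ)) := by
    rw [Polynomial.C_eq_natCast]
  calc ∑ j ∈ Finset.range (m + 1),
        Polynomial.C ((m.choose j : ℚ)) * fall j
          * Polynomial.C ((derivative (fall (m - j))).eval (b : ℚ))
      = ∑ j ∈ Finset.range (m + 1), (Polynomial.C (Polynomial.C ((m.choose j : ℚ)))
          * Polynomial.C (fall j) * (derivative (fall (m - j))).map Cc).eval ((b : Polynomial ℚ)) := by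
        apply Finset.sum_congr rfl
        intro j _
        rw [eval_mul, eval_mul, eval_C, eval_C, eval_map, hb, eval₂_at_apply]
    _ = (((derivative (fall m)).map Cc).comp (X + Polynomial.C X)).eval ((b : Polynomial ℚ)) := h
    _ = (derivative (fall m)).comp (X + Polynomial.C (b : ℚ)) := by
        rw [eval_comp, eval_add, eval_X, eval_C, eval_map, Polynomial.comp, hb, add_comm]

/-- Fully evaluated vdm : base Vandermonde numbers. -/
lemma vdm_eval (m a b : ℕ) :
    ∑ j ∈ Finset.range (m + 1),
        (m.choose j : ℚ) * (a.descFactorial j : ℚ) * (b.descFactorial (m - j) : ℚ)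
      = ((a + b).descFactorial m : ℚ) := by
  have h := congrArg (Polynomial.eval ((a : ℚ))) (vdm_evy m b)
  rw [eval_finset_sum, eval_comp, eval_add, eval_X, eval_C] at h
  have hc : ((a:ℚ) + (b:ℚ)) = (((a+b:ℕ)):ℚ) := by push_cast; ring
  rw [hc, fall_eval] at h
  rw [← h]
  apply Finset.sum_congr rfl
  intro j _
  rw [eval_mul, eval_mul, eval_C, eval_C, fall_eval, fall_eval]

/-- Evaluated first-derivative identity. -/
lemma dvdm_eval (m a b : ℕ) (hb : m ≤ b) :
    ∑ j ∈ Finset.range (m + 1),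
        (m.choose j : ℚ) * (a.descFactorial j : ℚ)
          * ((b.descFactorial (m - j) : ℚ) * (H b - H (b - (m - j))))
      = ((a + b).descFactorial m : ℚ) * (H (a + b) - H (a + b - m)) := by
  have h := congrArg (Polynomial.eval ((a : ℚ))) (dvdm_evy m b)
  rw [eval_finset_sum, eval_comp, eval_add, eval_X, eval_C] at h
  have hc : ((a:ℚ) + (b:ℚ)) = (((a+b:ℕ)):ℚ) := by push_cast; ring
  rw [hc, fall_deriv_eval (a+b) m (by omega)] at h
  rw [← h]
  apply Finset.sum_congr rfl
  intro j hj
  have hjm : j ≤ m := Nat.lt_succ_iff.mp (Finset.mem_range.mp hj)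
  rw [eval_mul, eval_mul, eval_C, eval_C, fall_eval, fall_deriv_eval b (m-j) (by omega)]

/-- Evaluated mixed second derivative identity. -/
lemma ddvdm_eval (m : ℕ) :
    ∑ j ∈ Finset.range (m + 1),
        (m.choose j : ℚ) * ((m.descFactorial j : ℚ) * (H m - H (m - j)))
          * ((m.descFactorial (m - j) : ℚ) * (H m - H (m - (m - j))))
      = ((2*m).descFactorial m : ℚ) * ((H (2*m) - H (2*m - m))^2 - (H2 (2*m) - H2 (2*m - m))) := by
  have h := congrArg derivative (dvdm_evy m m)
  rw [derivative_sum, derivative_comp] at h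
  simp only [derivative_add, derivative_X, derivative_C, add_zero, one_mul] at h
  have h2 := congrArg (Polynomial.eval ((m : ℚ))) h
  rw [eval_finset_sum, eval_comp, eval_add, eval_X, eval_C] at h2
  have hc : ((m:ℚ) + (m:ℚ)) = (((2*m:ℕ)):ℚ) := by push_cast; ring
  rw [hc, fall_deriv2_eval (2*m) m (by omega)] at h2
  rw [← h2]
  apply Finset.sum_congr rfl
  intro j hj
  have hjm : j ≤ m := Nat.lt_succ_iff.mp (Finset.mem_range.mp hj)
  have hre : ∀ (c d : ℚ) (p : Polynomial ℚ),
      derivative (Polynomial.C c * p * Polynomial.C d) = Polynomial.C (c * d) * derivative p := by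
    intro c d p
    rw [show Polynomial.C c * p * Polynomial.C d = (Polynomial.C c * Polynomial.C d) * p by ring,
      ← map_mul Polynomial.C, derivative_C_mul]
  rw [hre, eval_mul, eval_C, fall_deriv_eval m j hjm, fall_deriv_eval m (m - j) (by omega)]
  ring

lemma fact_ne (m : ℕ) : ((m.factorial : ℚ)) ≠ 0 := by
  exact_mod_cast Nat.factorial_ne_zero m

lemma desc_cast (x k : ℕ) : ((x.descFactorial k : ℚ)) = (k.factorial : ℚ) * (x.choose k : ℚ) := by
  exact_mod_cast congrArg (Nat.cast : ℕ → ℚ) (Nat.descFactorial_eq_factorial_mul_choose x k)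

lemma fact_split (m j : ℕ) (h : j ≤ m) :
    (m.factorial : ℚ) = (m.choose j : ℚ) * (j.factorial : ℚ) * ((m-j).factorial : ℚ) := by
  exact_mod_cast (congrArg (Nat.cast : ℕ → ℚ) (Nat.choose_mul_factorial_mul_factorial h)).symm

lemma choose_symm_q (m j : ℕ) (h : j ≤ m) : ((m.choose (m - j) : ℚ)) = (m.choose j : ℚ) := by
  exact_mod_cast congrArg (Nat.cast : ℕ → ℚ) (Nat.choose_symm h)

lemma B1 (m : ℕ) : ∑ j ∈ Finset.range (m+1), ((m.choose j : ℚ))^2 = ((2*m).choose m : ℚ) := by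
  have h := vdm_eval m m m
  have hs : ∑ j ∈ Finset.range (m + 1),
        (m.choose j : ℚ) * (m.descFactorial j : ℚ) * (m.descFactorial (m - j) : ℚ)
      = ∑ j ∈ Finset.range (m+1), (m.factorial : ℚ) * ((m.choose j : ℚ))^2 := by
    apply Finset.sum_congr rfl
    intro j hj
    have hjm : j ≤ m := Nat.lt_succ_iff.mp (Finset.mem_range.mp hj)
    rw [desc_cast, desc_cast, choose_symm_q m j hjm, fact_split m j hjm]
    ring
  rw [hs, ← Finset.mul_sum, show m + m = 2*m by ring, desc_cast] at h
  exact mul_left_cancel₀ (fact_ne m) h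

lemma B2 (m : ℕ) : ∑ j ∈ Finset.range (m+1), (((m+1).choose j : ℚ)) * (m.choose j : ℚ)
    = ((2*m+1).choose m : ℚ) := by
  have h := vdm_eval m (m+1) m
  have hs : ∑ j ∈ Finset.range (m + 1),
        (m.choose j : ℚ) * ((m+1).descFactorial j : ℚ) * (m.descFactorial (m - j) : ℚ)
      = ∑ j ∈ Finset.range (m+1), (m.factorial : ℚ) * ((((m+1).choose j : ℚ)) * (m.choose j : ℚ)) := by
    apply Finset.sum_congr rfl
    intro j hj
    have hjm : j ≤ m := Nat.lt_succ_iff.mp (Finset.mem_range.mp hj)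
    rw [desc_cast, desc_cast, choose_symm_q m j hjm, fact_split m j hjm]
    ring
  rw [hs, ← Finset.mul_sum, show m + 1 + m = 2*m+1 by ring, desc_cast] at h
  exact mul_left_cancel₀ (fact_ne m) h

lemma I1 (m : ℕ) : ∑ j ∈ Finset.range (m+1), ((m.choose j : ℚ))^2 * (H m - H j)
    = ((2*m).choose m : ℚ) * (H (2*m) - H m) := by
  have h := dvdm_eval m m m (le_refl m)
  have hs : ∑ j ∈ Finset.range (m + 1),
        (m.choose j : ℚ) * (m.descFactorial j : ℚ)
          * ((m.descFactorial (m - j) : ℚ) * (H m - H (m - (m - j))))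
      = ∑ j ∈ Finset.range (m+1), (m.factorial : ℚ) * (((m.choose j : ℚ))^2 * (H m - H j)) := by
    apply Finset.sum_congr rfl
    intro j hj
    have hjm : j ≤ m := Nat.lt_succ_iff.mp (Finset.mem_range.mp hj)
    rw [desc_cast, desc_cast, choose_symm_q m j hjm, fact_split m j hjm,
      show m - (m - j) = j by omega]
    ring
  rw [hs, ← Finset.mul_sum, show m + m = 2*m by ring, show 2*m - m = m by omega, desc_cast] at h
  apply mul_left_cancel₀ (fact_ne m)
  rw [h]; ring

lemma I3 (m : ℕ) : ∑ j ∈ Finset.range (m+1), (((m+1).choose j : ℚ)) * (m.choose j : ℚ) * (H m - H j)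
    = ((2*m+1).choose m : ℚ) * (H (2*m+1) - H (m+1)) := by
  have h := dvdm_eval m (m+1) m (le_refl m)
  have hs : ∑ j ∈ Finset.range (m + 1),
        (m.choose j : ℚ) * ((m+1).descFactorial j : ℚ)
          * ((m.descFactorial (m - j) : ℚ) * (H m - H (m - (m - j))))
      = ∑ j ∈ Finset.range (m+1), (m.factorial : ℚ)
          * ((((m+1).choose j : ℚ)) * (m.choose j : ℚ) * (H m - H j)) := by
    apply Finset.sum_congr rfl
    intro j hj
    have hjm : j ≤ m := Nat.lt_succ_iff.mp (Finset.mem_range.mp hj)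
    rw [desc_cast, desc_cast, choose_symm_q m j hjm, fact_split m j hjm,
      show m - (m - j) = j by omega]
    ring
  rw [hs, ← Finset.mul_sum, show m + 1 + m = 2*m+1 by ring,
    show 2*m+1 - m = m+1 by omega, desc_cast] at h
  apply mul_left_cancel₀ (fact_ne m)
  rw [h]; ring

lemma I2 (m : ℕ) :
    ∑ j ∈ Finset.range (m+1), ((m.choose j : ℚ))^2 * (H m - H j) * (H m - H (m - j))
      = ((2*m).choose m : ℚ) * ((H (2*m) - H m)^2 - (H2 (2*m) - H2 m)) := by
  have h := ddvdm_eval m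
  have hs : ∑ j ∈ Finset.range (m + 1),
        (m.choose j : ℚ) * ((m.descFactorial j : ℚ) * (H m - H (m - j)))
          * ((m.descFactorial (m - j) : ℚ) * (H m - H (m - (m - j))))
      = ∑ j ∈ Finset.range (m+1), (m.factorial : ℚ)
          * (((m.choose j : ℚ))^2 * (H m - H j) * (H m - H (m - j))) := by
    apply Finset.sum_congr rfl
    intro j hj
    have hjm : j ≤ m := Nat.lt_succ_iff.mp (Finset.mem_range.mp hj)
    rw [desc_cast, desc_cast, choose_symm_q m j hjm, fact_split m j hjm,
      show m - (m - j) = j by omega]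
    ring
  rw [hs, ← Finset.mul_sum, show 2*m - m = m by omega, desc_cast] at h
  apply mul_left_cancel₀ (fact_ne m)
  rw [h]; ring

lemma key_cast (m j : ℕ) :
    (((m+1).choose (j+1) : ℚ)) * ((j : ℚ) + 1) = ((m : ℚ) + 1) * (m.choose j : ℚ) := by
  have h : (m+1) * m.choose j = (m+1).choose (j+1) * (j+1) := by
    simpa [Nat.succ_eq_add_one] using Nat.add_one_mul_choose_eq m j
  have h2 : (((m+1) * m.choose j : ℕ) : ℚ) = (((m+1).choose (j+1) * (j+1) : ℕ) : ℚ) := by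
    exact_mod_cast congrArg (Nat.cast : ℕ → ℚ) h
  push_cast at h2
  linarith


end Stmt16Aux

open Stmt16Aux

set_option maxHeartbeats 1000000 in
theorem stmt16 (n : ℕ) (hn : 1 ≤ n) :
    ∑ k ∈ Finset.Icc 1 n, (n.choose k : ℚ)^2 * (k : ℚ)^2 * H k * H (n - k)
      = (n : ℚ)^3 / (4 * n - 2) * ((2 * n).choose n : ℚ)
          * ((H2 n - H2 (2 * n - 1))
            + (2 * H n - H (2 * n - 1))
              * (2 * H n - H (2 * n - 1) - (2 * (n : ℚ)^2 - 1) / (2 * (n : ℚ)^3 - (n : ℚ)^2))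
            - ((n : ℚ) - 1) * (2 * (n : ℚ)^2 - 2 * n + 1) / ((n : ℚ)^3 * (2 * (n : ℚ) - 1)^2)) := by
  obtain ⟨m, rfl⟩ : ∃ m, n = m + 1 := ⟨n - 1, by omega⟩
  have hmq1 : ((m : ℚ) + 1) ≠ 0 := by positivity
  have h2m1 : (2 * (m : ℚ) + 1) ≠ 0 := by positivity
  -- abbreviations
  set c1 : ℚ := ((2*m+1).choose m : ℚ) with hc1def
  -- choose relations
  have hccn : ((2*(m+1)).choose (m+1) : ℚ) = 2 * c1 := by
    have h : (2*m+2) * (2*m+1).choose m = (2*m+2).choose (m+1) * (m+1) := by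
      simpa [Nat.succ_eq_add_one] using Nat.add_one_mul_choose_eq (2*m+1) m
    have h' : (((2*m+2) * (2*m+1).choose m : ℕ) : ℚ)
        = (((2*m+2).choose (m+1) * (m+1) : ℕ) : ℚ) := by
      exact_mod_cast congrArg (Nat.cast : ℕ → ℚ) h
    push_cast at h'
    have hidx : 2*(m+1) = 2*m+2 := by ring
    rw [hidx]
    apply mul_right_cancel₀ hmq1
    push_cast
    linarith
  have hc2 : ((2*m).choose m : ℚ) = ((m:ℚ)+1) * c1 / (2*(m:ℚ)+1) := by
    have h : (2*m+1) * (2*m).choose m = (2*m+1).choose (m+1) * (m+1) := by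
      simpa [Nat.succ_eq_add_one] using Nat.add_one_mul_choose_eq (2*m) m
    have hsym : (2*m+1).choose (m+1) = (2*m+1).choose m := by
      have := Nat.choose_symm (show m ≤ 2*m+1 by omega)
      rw [show 2*m+1-m = m+1 by omega] at this
      exact this
    rw [hsym] at h
    have h' : (((2*m+1) * (2*m).choose m : ℕ) : ℚ)
        = (((2*m+1).choose m * (m+1) : ℕ) : ℚ) := by
      exact_mod_cast congrArg (Nat.cast : ℕ → ℚ) h
    push_cast at h'
    rw [eq_div_iff h2m1]
    linarith
  -- Step A: reindex
  have stepA : ∑ k ∈ Finset.Icc 1 (m+1), (((m+1).choose k : ℚ))^2 * (k : ℚ)^2 * H k * H ((m+1) - k)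
      = ((m:ℚ)+1)^2 * ∑ j ∈ Finset.range (m+1),
          ((m.choose j : ℚ))^2 * H (j+1) * H (m - j) := by
    rw [← Finset.Ico_add_one_right_eq_Icc, Finset.sum_Ico_eq_sum_range]
    rw [show m + 1 + 1 - 1 = m + 1 by omega]
    rw [Finset.mul_sum]
    apply Finset.sum_congr rfl
    intro j hj
    have hjm : j ≤ m := Nat.lt_succ_iff.mp (Finset.mem_range.mp hj)
    have hidx : (m+1) - (1+j) = m - j := by omega
    have hidx2 : 1 + j = j + 1 := by omega
    rw [hidx, hidx2]
    have hsq : (((m+1).choose (j+1) : ℚ))^2 * ((j+1 : ℕ) : ℚ)^2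
        = ((m:ℚ)+1)^2 * ((m.choose j : ℚ))^2 := by
      rw [← mul_pow, ← mul_pow]
      congr 1
      push_cast
      exact key_cast m j
    push_cast at hsq ⊢
    linear_combination (H (j+1) * H (m-j)) * hsq
  -- Step B : split H (j+1)
  have stepB : ∑ j ∈ Finset.range (m+1), ((m.choose j : ℚ))^2 * H (j+1) * H (m - j)
      = (∑ j ∈ Finset.range (m+1), ((m.choose j : ℚ))^2 * H j * H (m - j))
        + ∑ j ∈ Finset.range (m+1), ((m.choose j : ℚ))^2 * (1/((j:ℚ)+1)) * H (m - j) := by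
    rw [← Finset.sum_add_distrib]
    apply Finset.sum_congr rfl
    intro j _
    rw [H_succ j]
    ring
  -- theta1 : pull out 1/(m+1)
  have htheta : ∑ j ∈ Finset.range (m+1), ((m.choose j : ℚ))^2 * (1/((j:ℚ)+1)) * H (m - j)
      = (1/((m:ℚ)+1)) * ∑ j ∈ Finset.range (m+1),
          (((m+1).choose (j+1) : ℚ)) * (m.choose j : ℚ) * H (m - j) := by
    rw [Finset.mul_sum]
    apply Finset.sum_congr rfl
    intro j _
    have hj1 : ((j:ℚ)+1) ≠ 0 := by positivity
    have hk := key_cast m j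
    field_simp
    linear_combination (-((m.choose j : ℚ) * H (m - j))) * hk
  -- reflection for the theta sum
  have hrefl : ∑ j ∈ Finset.range (m+1), (((m+1).choose (j+1) : ℚ)) * (m.choose j : ℚ) * H (m - j)
      = ∑ j ∈ Finset.range (m+1), (((m+1).choose j : ℚ)) * (m.choose j : ℚ) * H j := by
    rw [← Finset.sum_range_reflect (fun j => (((m+1).choose (j+1) : ℚ)) * (m.choose j : ℚ) * H (m - j)) (m+1)]
    apply Finset.sum_congr rfl
    intro j hj
    have hjm : j ≤ m := Nat.lt_succ_iff.mp (Finset.mem_range.mp hj)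
    rw [show m + 1 - 1 - j = m - j by omega]
    rw [show m - j + 1 = (m+1) - j by omega]
    rw [show ((m+1).choose ((m+1) - j)) = (m+1).choose j from Nat.choose_symm (by omega)]
    rw [show (m.choose (m - j)) = m.choose j from Nat.choose_symm (by omega)]
    rw [show m - (m - j) = j by omega]
  -- reflection for u
  have hreflu : ∑ j ∈ Finset.range (m+1), ((m.choose j : ℚ))^2 * H (m - j)
      = ∑ j ∈ Finset.range (m+1), ((m.choose j : ℚ))^2 * H j := by
    rw [← Finset.sum_range_reflect (fun j => ((m.choose j : ℚ))^2 * H (m - j)) (m+1)]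
    apply Finset.sum_congr rfl
    intro j hj
    have hjm : j ≤ m := Nat.lt_succ_iff.mp (Finset.mem_range.mp hj)
    rw [show m + 1 - 1 - j = m - j by omega]
    rw [show (m.choose (m - j)) = m.choose j from Nat.choose_symm (by omega)]
    rw [show m - (m - j) = j by omega]
  -- closed form for u := sum C^2 H j
  have hu : ∑ j ∈ Finset.range (m+1), ((m.choose j : ℚ))^2 * H j
      = ((2*m).choose m : ℚ) * (2 * H m - H (2*m)) := by
    have e : ∑ j ∈ Finset.range (m+1), ((m.choose j : ℚ))^2 * (H m - H j)
        = H m * (∑ j ∈ Finset.range (m+1), ((m.choose j : ℚ))^2)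
          - ∑ j ∈ Finset.range (m+1), ((m.choose j : ℚ))^2 * H j := by
      rw [Finset.mul_sum, ← Finset.sum_sub_distrib]
      apply Finset.sum_congr rfl
      intro j _; ring
    rw [I1 m, B1 m] at e
    linarith
  -- closed form for v := sum C(m+1,j) C(m,j) H j
  have hv : ∑ j ∈ Finset.range (m+1), (((m+1).choose j : ℚ)) * (m.choose j : ℚ) * H j
      = c1 * (H m + H (m+1) - H (2*m+1)) := by
    have e : ∑ j ∈ Finset.range (m+1), (((m+1).choose j : ℚ)) * (m.choose j : ℚ) * (H m - H j)
        = H m * (∑ j ∈ Finset.range (m+1), (((m+1).choose j : ℚ)) * (m.choose j : ℚ))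
          - ∑ j ∈ Finset.range (m+1), (((m+1).choose j : ℚ)) * (m.choose j : ℚ) * H j := by
      rw [Finset.mul_sum, ← Finset.sum_sub_distrib]
      apply Finset.sum_congr rfl
      intro j _; ring
    rw [I3 m, B2 m] at e
    rw [← hc1def] at e
    linarith
  -- closed form for s2 := sum C^2 Hj H(m-j)
  have hs2 : ∑ j ∈ Finset.range (m+1), ((m.choose j : ℚ))^2 * H j * H (m - j)
      = ((2*m).choose m : ℚ) * ((H (2*m) - H m)^2 - (H2 (2*m) - H2 m))
        - (H m)^2 * ((2*m).choose m : ℚ)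
        + 2 * H m * (((2*m).choose m : ℚ) * (2 * H m - H (2*m))) := by
    have e : ∑ j ∈ Finset.range (m+1), ((m.choose j : ℚ))^2 * (H m - H j) * (H m - H (m - j))
        = (H m)^2 * (∑ j ∈ Finset.range (m+1), ((m.choose j : ℚ))^2)
          - H m * (∑ j ∈ Finset.range (m+1), ((m.choose j : ℚ))^2 * H (m - j))
          - H m * (∑ j ∈ Finset.range (m+1), ((m.choose j : ℚ))^2 * H j)
          + ∑ j ∈ Finset.range (m+1), ((m.choose j : ℚ))^2 * H j * H (m - j) := by
      rw [Finset.mul_sum, Finset.mul_sum, Finset.mul_sum]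
      rw [← Finset.sum_sub_distrib, ← Finset.sum_sub_distrib, ← Finset.sum_add_distrib]
      apply Finset.sum_congr rfl
      intro j _; ring
    rw [I2 m, B1 m, hreflu, hu] at e
    linarith
  -- put together
  rw [stepA, stepB, htheta, hrefl, hv, hs2, hc2, hccn]
  -- index normalizations
  rw [show 2*(m+1) - 1 = 2*m+1 by omega]
  -- H rewrites
  have hH2m : H (2*m) = H (2*m+1) - 1/(2*(m:ℚ)+1) := by
    have := H_succ (2*m)
    push_cast at this
    linarith
  have hH22m : H2 (2*m) = H2 (2*m+1) - 1/(2*(m:ℚ)+1)^2 := by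
    have := H2_succ (2*m)
    push_cast at this
    linarith
  have hHm1 : H (m+1) = H m + 1/((m:ℚ)+1) := by
    have := H_succ m
    push_cast at this
    linarith
  have hH2m1 : H2 (m+1) = H2 m + 1/((m:ℚ)+1)^2 := by
    have := H2_succ m
    push_cast at this
    linarith
  rw [hH2m, hH22m, hHm1, hH2m1]
  push_cast
  clear_value c1
  clear hc1def hccn hc2 stepA stepB htheta hrefl hreflu hu hv hs2 hH2m hH22m hHm1 hH2m1 hn
  generalize H m = A
  generalize H (2*m+1) = G
  generalize H2 m = Q
  generalize H2 (2*m+1) = R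
  generalize hM : (m:ℚ) = M
  rw [hM] at hmq1 h2m1
  clear hM
  have h3 : (4*(M+1) - 2) ≠ 0 := by
    intro hc; apply h2m1; linarith
  have h4 : (2*(M+1)^3 - (M+1)^2) ≠ 0 := by
    have he : 2*(M+1)^3 - (M+1)^2 = (M+1)^2 * (2*M+1) := by ring
    rw [he]; exact mul_ne_zero (pow_ne_zero 2 hmq1) h2m1
  have h5 : ((M+1)^3*(2*(M+1)-1)^2) ≠ 0 := by
    have he : 2*(M+1)-1 = 2*M+1 := by ring
    rw [he]; exact mul_ne_zero (pow_ne_zero 3 hmq1) (pow_ne_zero 2 h2m1)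
  have h6 : M * 2 + 1 ≠ 0 := by intro hc; apply h2m1; linarith
  have h7 : (M + 1) * 2 - 1 ≠ 0 := by intro hc; apply h2m1; linarith
  have h8 : (M + 1) * 4 - 2 ≠ 0 := by intro hc; apply h2m1; linarith
  field_simp
  ring
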